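/- Let G_t : ℝⁿ × ℝⁿ → ℝⁿ × ℝⁿ be the map G_t(x,y) = (x, y + tx), and for 0 ≤ i ≤ n let κ_i be the n-form on ℝⁿ × ℝⁿ given by κ_i = (1/(i!(n−i)!)) Σ_{π ∈ S_n} sign(π) dx_{π(1)} ∧ … ∧ dx_{π(n−i)} ∧ dy_{π(n−i+1)} ∧ … ∧ dy_{π(n)}. Then the pullback satisfies G_t^* κ_n = Σ_{i=0}^n t^{n−i} κ_i. -/

import Mathlib

/-- The invariant `n`-form `κ_i` on `ℝⁿ × ℝⁿ`, evaluated on `n` tangent vectors: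
`κ_i = (1/(i!(n−i)!)) Σ_{π ∈ S_n} sign(π) dx_{π(1)} ∧ … ∧ dx_{π(n−i)} ∧ dy_{π(n−i+1)} ∧ … ∧ dy_{π(n)}`. -/
noncomputable def kappa (n i : ℕ) (v : Fin n → (Fin n → ℝ) × (Fin n → ℝ)) : ℝ :=
  (1 / ((Nat.factorial i : ℝ) * (Nat.factorial (n - i) : ℝ))) *
    ∑ π : Equiv.Perm (Fin n), ∑ σ : Equiv.Perm (Fin n),
      ((Equiv.Perm.sign π : ℤ) : ℝ) * ((Equiv.Perm.sign σ : ℤ) : ℝ) *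
        ∏ k : Fin n, (if (k : ℕ) < n - i then (v (σ k)).1 (π k) else (v (σ k)).2 (π k))

/-- The alternating sum underlying `kappa`, with the "which coordinates are `dx`"
data given by an arbitrary finite set `S`. -/
noncomputable def TT (n : ℕ) (v : Fin n → (Fin n → ℝ) × (Fin n → ℝ)) (S : Finset (Fin n)) : ℝ :=
  ∑ π : Equiv.Perm (Fin n), ∑ σ : Equiv.Perm (Fin n),
    ((Equiv.Perm.sign π : ℤ) : ℝ) * ((Equiv.Perm.sign σ : ℤ) : ℝ) *
      ∏ k : Fin n, (if k ∈ S then (v (σ k)).1 (π k) else (v (σ k)).2 (π k))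

/-- Any two finsets of the same cardinality are matched by a permutation. -/
lemma exists_perm_map {n : ℕ} {S S' : Finset (Fin n)} (h : S.card = S'.card) :
    ∃ ρ : Equiv.Perm (Fin n), ∀ k, k ∈ S ↔ ρ k ∈ S' := by
  classical
  have h1 : Fintype.card {k // k ∈ S} = Fintype.card {k // k ∈ S'} := by
    simp [Fintype.card_coe, h]
  have h2 : Fintype.card {k : Fin n // ¬ k ∈ S} = Fintype.card {k : Fin n // ¬ k ∈ S'} := by
    rw [Fintype.card_subtype_compl, Fintype.card_subtype_compl, h1]
  let e1 : {k // k ∈ S} ≃ {k // k ∈ S'} := Fintype.equivOfCardEq h1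
  let e2 : {k : Fin n // ¬ k ∈ S} ≃ {k : Fin n // ¬ k ∈ S'} := Fintype.equivOfCardEq h2
  refine ⟨(Equiv.sumCompl (· ∈ S)).symm.trans ((e1.sumCongr e2).trans
    (Equiv.sumCompl (· ∈ S'))), fun k => ?_⟩
  by_cases hk : k ∈ S
  · simp [Equiv.sumCompl_symm_apply_of_pos hk, hk, (e1 ⟨k, hk⟩).2]
  · simp [hk, Equiv.sumCompl_symm_apply_of_neg hk, (e2 ⟨k, hk⟩).2]

lemma TT_congr {n : ℕ} (v : Fin n → (Fin n → ℝ) × (Fin n → ℝ)) {S S' : Finset (Fin n)}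
    (h : S.card = S'.card) : TT n v S = TT n v S' := by
  classical
  obtain ⟨ρ, hρ⟩ := exists_perm_map h
  have hsign : ((Equiv.Perm.sign ρ⁻¹ : ℤ) : ℝ) * ((Equiv.Perm.sign ρ⁻¹ : ℤ) : ℝ) = 1 := by
    rw [← Int.cast_mul, ← Units.val_mul, Int.units_mul_self]; simp
  unfold TT
  refine Fintype.sum_equiv (Equiv.mulRight ρ⁻¹) _ _ (fun π => ?_)
  refine Fintype.sum_equiv (Equiv.mulRight ρ⁻¹) _ _ (fun σ => ?_)
  have hprod : (∏ k : Fin n, (if k ∈ S then (v (σ k)).1 (π k) else (v (σ k)).2 (π k)))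
      = ∏ k : Fin n, (if k ∈ S' then (v ((σ * ρ⁻¹) k)).1 ((π * ρ⁻¹) k)
          else (v ((σ * ρ⁻¹) k)).2 ((π * ρ⁻¹) k)) := by
    rw [← Equiv.prod_comp ρ (fun k => if k ∈ S' then (v ((σ * ρ⁻¹) k)).1 ((π * ρ⁻¹) k)
        else (v ((σ * ρ⁻¹) k)).2 ((π * ρ⁻¹) k))]
    refine Finset.prod_congr rfl (fun k _ => ?_)
    simp only [Equiv.Perm.mul_apply]
    rw [show ρ⁻¹ (ρ k) = k from ρ.symm_apply_apply k]
    by_cases hk : k ∈ S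
    · rw [if_pos hk, if_pos ((hρ k).1 hk)]
    · rw [if_neg hk, if_neg (fun hc => hk ((hρ k).2 hc))]
  have hsgn : ((Equiv.Perm.sign π : ℤ) : ℝ) * ((Equiv.Perm.sign σ : ℤ) : ℝ)
      = ((Equiv.Perm.sign (π * ρ⁻¹) : ℤ) : ℝ) * ((Equiv.Perm.sign (σ * ρ⁻¹) : ℤ) : ℝ) := by
    simp only [Equiv.Perm.sign_mul, Units.val_mul, Int.cast_mul]
    calc ((Equiv.Perm.sign π : ℤ) : ℝ) * ((Equiv.Perm.sign σ : ℤ) : ℝ)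
        = (((Equiv.Perm.sign π : ℤ) : ℝ) * ((Equiv.Perm.sign σ : ℤ) : ℝ)) *
          (((Equiv.Perm.sign ρ⁻¹ : ℤ) : ℝ) * ((Equiv.Perm.sign ρ⁻¹ : ℤ) : ℝ)) := by
          rw [hsign, mul_one]
      _ = _ := by ring
  simp only [Equiv.coe_mulRight]
  rw [hprod, hsgn]

/-- The "standard" index set `{k : k < m}`. -/
def S0 (n m : ℕ) : Finset (Fin n) := Finset.univ.filter (fun k => (k : ℕ) < m)

lemma card_S0 {n m : ℕ} (h : m ≤ n) : (S0 n m).card = m := by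
  classical
  have : S0 n m = Finset.univ.map (Fin.castLEEmb h) := by
    ext k
    simp only [S0, Finset.mem_filter, Finset.mem_univ, true_and, Finset.mem_map,
      Fin.castLEEmb_apply]
    constructor
    · intro hk; exact ⟨⟨(k : ℕ), hk⟩, by ext; simp⟩
    · rintro ⟨j, rfl⟩; exact j.2
  rw [this, Finset.card_map, Finset.card_univ, Fintype.card_fin]

lemma kappa_eq_TT (n i : ℕ) (v : Fin n → (Fin n → ℝ) × (Fin n → ℝ)) :
    kappa n i v = (1 / ((Nat.factorial i : ℝ) * (Nat.factorial (n - i) : ℝ))) *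
      TT n v (S0 n (n - i)) := by
  unfold kappa TT S0
  simp [Finset.mem_filter]

/-- the pullback of `κ_n` under `G_t(x,y) = (x, y + tx)` satisfies
`G_t^* κ_n = Σ_{i=0}^n t^{n−i} κ_i`. -/
theorem stmt7 (n : ℕ) (t : ℝ) (v : Fin n → (Fin n → ℝ) × (Fin n → ℝ)) :
    kappa n n (fun j => ((v j).1, fun m => (v j).2 m + t * (v j).1 m)) =
      ∑ i ∈ Finset.range (n + 1), t ^ (n - i) * kappa n i v := by
  classical
  -- abbreviation for the sign factor
  set c : Equiv.Perm (Fin n) → Equiv.Perm (Fin n) → ℝ :=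
    fun π σ => ((Equiv.Perm.sign π : ℤ) : ℝ) * ((Equiv.Perm.sign σ : ℤ) : ℝ) with hc
  -- expand the product over subsets
  have hprod : ∀ (π σ : Equiv.Perm (Fin n)),
      (∏ k : Fin n, ((v (σ k)).2 (π k) + t * (v (σ k)).1 (π k)))
        = ∑ S ∈ (Finset.univ : Finset (Fin n)).powerset,
            t ^ S.card * ∏ k : Fin n,
              (if k ∈ S then (v (σ k)).1 (π k) else (v (σ k)).2 (π k)) := by
    intro π σ
    have hpa := Finset.prod_add (fun k : Fin n => t * (v (σ k)).1 (π k))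
      (fun k : Fin n => (v (σ k)).2 (π k)) Finset.univ
    rw [show (∏ k : Fin n, ((v (σ k)).2 (π k) + t * (v (σ k)).1 (π k)))
        = ∏ k : Fin n, (t * (v (σ k)).1 (π k) + (v (σ k)).2 (π k)) from
        Finset.prod_congr rfl (fun k _ => add_comm _ _), hpa]
    refine Finset.sum_congr rfl (fun S _ => ?_)
    rw [Finset.prod_mul_distrib, Finset.prod_const]
    rw [Finset.prod_ite (fun k => (v (σ k)).1 (π k)) (fun k => (v (σ k)).2 (π k))]
    have h1 : Finset.univ.filter (fun k => k ∈ S) = S := by ext k; simp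
    have h2 : Finset.univ.filter (fun k => ¬ k ∈ S) = Finset.univ \ S := by ext k; simp
    rw [h1, h2]; ring
  -- LHS equals (1/n!) * ∑ over subsets of t^|S| * TT S
  have hL : kappa n n (fun j => ((v j).1, fun m => (v j).2 m + t * (v j).1 m))
      = (1 / (Nat.factorial n : ℝ)) *
        ∑ S ∈ (Finset.univ : Finset (Fin n)).powerset, t ^ S.card * TT n v S := by
    unfold kappa
    simp only [Nat.sub_self, Nat.not_lt_zero, if_false, Nat.factorial_zero,
      Nat.cast_one, mul_one]
    congr 1
    calc ∑ π : Equiv.Perm (Fin n), ∑ σ : Equiv.Perm (Fin n),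
          c π σ * ∏ k : Fin n, ((v (σ k)).2 (π k) + t * (v (σ k)).1 (π k))
        = ∑ π : Equiv.Perm (Fin n), ∑ σ : Equiv.Perm (Fin n),
            ∑ S ∈ (Finset.univ : Finset (Fin n)).powerset,
              t ^ S.card * (c π σ * ∏ k : Fin n,
                (if k ∈ S then (v (σ k)).1 (π k) else (v (σ k)).2 (π k))) := by
          refine Finset.sum_congr rfl fun π _ => Finset.sum_congr rfl fun σ _ => ?_
          rw [hprod π σ, Finset.mul_sum]
          exact Finset.sum_congr rfl fun S _ => by ring
      _ = ∑ S ∈ (Finset.univ : Finset (Fin n)).powerset,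
            ∑ π : Equiv.Perm (Fin n), ∑ σ : Equiv.Perm (Fin n),
              t ^ S.card * (c π σ * ∏ k : Fin n,
                (if k ∈ S then (v (σ k)).1 (π k) else (v (σ k)).2 (π k))) := by
          rw [Finset.sum_congr rfl fun π (_ : π ∈ (Finset.univ : Finset (Equiv.Perm (Fin n)))) =>
            (Finset.sum_comm : (∑ σ : Equiv.Perm (Fin n),
              ∑ S ∈ (Finset.univ : Finset (Fin n)).powerset,
                t ^ S.card * (c π σ * ∏ k : Fin n,
                  (if k ∈ S then (v (σ k)).1 (π k) else (v (σ k)).2 (π k)))) = _)]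
          exact Finset.sum_comm
      _ = ∑ S ∈ (Finset.univ : Finset (Fin n)).powerset, t ^ S.card * TT n v S := by
          refine Finset.sum_congr rfl fun S _ => ?_
          unfold TT
          rw [Finset.mul_sum]
          exact Finset.sum_congr rfl fun π _ => by rw [Finset.mul_sum]
  rw [hL, Finset.sum_powerset]
  have hcard : (Finset.univ : Finset (Fin n)).card = n := by
    rw [Finset.card_univ, Fintype.card_fin]
  rw [hcard]
  -- group subsets of a given cardinality
  have hgroup : ∀ m ∈ Finset.range (n + 1),
      (∑ S ∈ Finset.powersetCard m (Finset.univ : Finset (Fin n)), t ^ S.card * TT n v S)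
        = (n.choose m : ℝ) * (t ^ m * TT n v (S0 n m)) := by
    intro m hm
    have hmn : m ≤ n := Nat.lt_succ_iff.mp (Finset.mem_range.mp hm)
    have : ∀ S ∈ Finset.powersetCard m (Finset.univ : Finset (Fin n)),
        t ^ S.card * TT n v S = t ^ m * TT n v (S0 n m) := by
      intro S hS
      have hSc : S.card = m := Finset.mem_powersetCard_univ.mp hS
      rw [hSc, TT_congr v (hSc.trans (card_S0 hmn).symm)]
    rw [Finset.sum_congr rfl this, Finset.sum_const, Finset.card_powersetCard, hcard,
      nsmul_eq_mul]
  rw [Finset.sum_congr rfl hgroup, Finset.mul_sum]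
  -- rewrite the RHS via TT and reflect the sum
  have hR : ∀ i, t ^ (n - i) * kappa n i v
      = t ^ (n - i) * ((1 / ((Nat.factorial i : ℝ) * (Nat.factorial (n - i) : ℝ))) *
          TT n v (S0 n (n - i))) := fun i => by rw [kappa_eq_TT]
  simp only [hR]
  rw [← Finset.sum_range_reflect
    (fun i => t ^ (n - i) * ((1 / ((Nat.factorial i : ℝ) * (Nat.factorial (n - i) : ℝ))) *
      TT n v (S0 n (n - i)))) (n + 1)]
  refine Finset.sum_congr rfl fun m hm => ?_
  have hmn : m ≤ n := Nat.lt_succ_iff.mp (Finset.mem_range.mp hm)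
  simp only [Nat.add_sub_cancel, Nat.sub_sub_self hmn]
  -- numerical identity: (1/n!) * C(n,m) = 1/(m!(n-m)!)
  have hfac : (n.choose m : ℝ) * (Nat.factorial m : ℝ) * (Nat.factorial (n - m) : ℝ)
      = (Nat.factorial n : ℝ) := by
    exact_mod_cast congrArg (Nat.cast : ℕ → ℝ)
      (Nat.choose_mul_factorial_mul_factorial hmn)
  have h1 : (Nat.factorial m : ℝ) ≠ 0 := Nat.cast_ne_zero.mpr (Nat.factorial_ne_zero m)
  have h2 : (Nat.factorial (n - m) : ℝ) ≠ 0 := Nat.cast_ne_zero.mpr (Nat.factorial_ne_zero _)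
  have h3 : (Nat.factorial n : ℝ) ≠ 0 := Nat.cast_ne_zero.mpr (Nat.factorial_ne_zero n)
  have key : (1 / (Nat.factorial n : ℝ)) * (n.choose m : ℝ)
      = 1 / ((Nat.factorial (n - m) : ℝ) * (Nat.factorial m : ℝ)) := by
    field_simp
    linarith [hfac]
  calc (1 / (Nat.factorial n : ℝ)) * ((n.choose m : ℝ) * (t ^ m * TT n v (S0 n m)))
      = ((1 / (Nat.factorial n : ℝ)) * (n.choose m : ℝ)) * (t ^ m * TT n v (S0 n m)) := by
        ring
    _ = _ := by rw [key]; ring
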